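/- Let {v, u} be a pair of vertices in a hyperedge S with intersecting intervals I_v ∩ I_u ≠ ∅, where v is leftmost in S (has minimum lower limit). Then {v,u} is a witness set: every query set feasible for orienting S contains v or u. -/
import Mathlib


open Finset

/-- Lower endpoint of vertex `v`'s interval after querying the set `Q`. -/
def qlo {V : Type*} [DecidableEq V] (L w : V → ℝ) (Q : Finset V) (v : V) : ℝ :=
  if v ∈ Q then w v else L v

/-- Upper endpoint of vertex `v`'s interval after querying the set `Q`. -/
def qhi {V : Type*} [DecidableEq V] (U w : V → ℝ) (Q : Finset V) (v : V) : ℝ :=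
  if v ∈ Q then w v else U v

/-- The query set `Q` suffices to orient the hyperedge `S`: some vertex of `S`
has its (updated) interval weakly below all other (updated) intervals of `S`. -/
def Solves {V : Type*} [DecidableEq V] (L U w : V → ℝ) (Q : Finset V) (S : Finset V) : Prop :=
  ∃ m ∈ S, ∀ u ∈ S, u ≠ m → qhi U w Q m ≤ qlo L w Q u

theorem stmt13 {V : Type*} [DecidableEq V] (L U w : V → ℝ)
    (hw : ∀ x : V, w x ∈ Set.Ioo (L x) (U x))
    (S : Finset V) (v u : V) (hvS : v ∈ S) (huS : u ∈ S) (hne : v ≠ u)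
    (hleft : ∀ x ∈ S, L v ≤ L x)
    (hint : (Set.Ioo (L v) (U v) ∩ Set.Ioo (L u) (U u)).Nonempty)
    (hwu : w u ∈ Set.Ioo (L v) (U v) ∩ Set.Ioo (L u) (U u)) :
    ∀ Q : Finset V, Solves L U w Q S → v ∈ Q ∨ u ∈ Q := by
  intro Q hQ
  by_contra hcon
  push_neg at hcon
  obtain ⟨hvQ, huQ⟩ := hcon
  obtain ⟨m, hmS, hm⟩ := hQ
  obtain ⟨⟨hw1, hw2⟩, ⟨hw3, hw4⟩⟩ := hwu
  by_cases hmv : m = v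
  · subst hmv
    have := hm u huS hne.symm
    simp only [qhi, qlo, if_neg hvQ, if_neg huQ] at this
    linarith
  · by_cases hmu : m = u
    · subst hmu
      have := hm v hvS (fun h => hmv h.symm)
      simp only [qhi, qlo, if_neg hvQ, if_neg huQ] at this
      linarith
    · have := hm v hvS (fun h => hmv h.symm)
      simp only [qlo, if_neg hvQ] at this
      have hLm := hleft m hmS
      have hwm := hw m
      have : w m ≤ qhi U w Q m := by
        simp only [qhi]; split <;> simp [le_of_lt hwm.2]
      have hq := hm v hvS (fun h => hmv h.symm)
      simp only [qlo, if_neg hvQ] at hq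
      linarith [hwm.1]
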